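/- Let G be a group with the subgroup topology G^H determined by a subgroup H. Then G^H satisfies the T₀ separation axiom if and only if H is the trivial subgroup. -/

import Mathlib

open Pointwise

/-- The subgroup topology on `G` determined by a collection `F` of subgroups:
generated by all left cosets of members of `F`. -/
def subgroupTopology {G : Type*} [Group G] (F : Set (Subgroup G)) : TopologicalSpace G :=
  TopologicalSpace.generateFrom {s | ∃ (g : G) (K : Subgroup G), K ∈ F ∧ s = g • (K : Set G)}

/-- A collection of subgroups is a neighbourhood family if any two members
contain a common member. -/
def IsNeighbourhoodFamily {G : Type*} [Group G] (F : Set (Subgroup G)) : Prop :=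
  ∀ K₁ ∈ F, ∀ K₂ ∈ F, ∃ S ∈ F, S ≤ K₁ ⊓ K₂

/-- The subgroup topology `G^H` determined by a subgroup `H`: generated by all
left cosets of subgroups containing `H`. -/
def subgroupTopologyOf {G : Type*} [Group G] (H : Subgroup G) : TopologicalSpace G :=
  subgroupTopology {K | H ≤ K}

lemma subgroupTopologyOf_saturated {G : Type*} [Group G] (H : Subgroup G) (U : Set G)
    (hU : TopologicalSpace.GenerateOpen
      {s | ∃ (g : G) (K : Subgroup G), K ∈ {K : Subgroup G | H ≤ K} ∧ s = g • (K : Set G)} U) :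
    ∀ x ∈ U, x • (H : Set G) ⊆ U := by
  induction hU with
  | basic s hs =>
      obtain ⟨g, K, hK, rfl⟩ := hs
      rintro x hx y hy
      obtain ⟨k, hk, rfl⟩ := hx
      obtain ⟨h, hh, rfl⟩ := hy
      exact ⟨k * h, K.mul_mem hk (hK hh), (mul_assoc g k h).symm⟩
  | univ => intro x _; exact Set.subset_univ _
  | inter s t _ _ ihs iht =>
      rintro x ⟨hxs, hxt⟩ y hy
      exact ⟨ihs x hxs hy, iht x hxt hy⟩
  | sUnion S _ ih =>
      rintro x ⟨s, hs, hxs⟩ y hy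
      exact ⟨s, hs, ih s hs x hxs hy⟩

theorem subgroupTopologyOf_t0_iff {G : Type*} [Group G] (H : Subgroup G) :
    @T0Space G (subgroupTopologyOf H) ↔ H = ⊥ := by
  letI := subgroupTopologyOf H
  constructor
  · intro hT0
    rw [eq_bot_iff]
    intro h hh
    have hins : Inseparable (h : G) 1 := by
      rw [inseparable_iff_forall_isOpen]
      intro U hU
      have hsat := subgroupTopologyOf_saturated H U hU
      constructor
      · intro hx
        have : h • (H : Set G) ⊆ U := hsat h hx
        exact this ⟨h⁻¹, H.inv_mem hh, mul_inv_cancel h⟩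
      · intro hx
        have : (1 : G) • (H : Set G) ⊆ U := hsat 1 hx
        exact this ⟨h, hh, (one_mul h)⟩
    simpa using hins.eq
  · rintro rfl
    have hsingle : ∀ g : G, IsOpen ({g} : Set G) := by
      intro g
      apply TopologicalSpace.GenerateOpen.basic
      refine ⟨g, ⊥, (by simp), ?_⟩
      simp [Subgroup.coe_bot, Set.smul_set_singleton]
    constructor
    intro x y hxy
    have := (inseparable_iff_forall_isOpen.mp hxy) {x} (hsingle x)
    simpa using (this.mp rfl).symm
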